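/- Let T > 0, ω₀ = 2π/T, and let L ≥ 1 and K ≥ 2L be integers. Let h : ℝ → ℝ be Lebesgue integrable with Fourier transform ĥ(ω) = ∫_ℝ h(t) e^{−iωt} dt satisfying ĥ(kω₀) ≠ 0 for every integer k with 1 ≤ |k| ≤ K. For amplitudes a₁, …, a_L > 0 and pairwise distinct delays τ₁, …, τ_L ∈ [0, T), define the filtered signal y_{a,τ}(t) = Σ_{k ∈ {−K,…,−1,1,…,K}} (1/T) ĥ(kω₀) (Σ_{ℓ=1}^{L} a_ℓ e^{−i k ω₀ τ_ℓ}) e^{i k ω₀ t}. Let 0 ≤ t₁ < t₂ < ⋯ < t_N < T with N ≥ 2K + 2. If two such parameter sets (a, τ) and (a′, τ′) satisfy ∫_{t_n}^{t_{n+1}} y_{a,τ}(t) dt = ∫_{t_n}^{t_{n+1}} y_{a′,τ′}(t) dt for every n = 1, …, N−1, then there exists a permutation π of {1, …, L} such that τ′_ℓ = τ_{π(ℓ)} and a′_ℓ = a_{π(ℓ)} for all ℓ. -/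

import Mathlib

open MeasureTheory intervalIntegral

private lemma friAux_exp_I_inj {r s : ℝ} (hrs : |r - s| < 2 * Real.pi)
    (he : Complex.exp (Complex.I * r) = Complex.exp (Complex.I * s)) : r = s := by
  have h1 : Complex.exp (Complex.I * r - Complex.I * s) = 1 := by
    rw [Complex.exp_sub, he, div_self (Complex.exp_ne_zero _)]
  obtain ⟨n, hn⟩ := Complex.exp_eq_one_iff.mp h1
  have h2 : Complex.I * ((r : ℂ) - s) = Complex.I * ((n : ℂ) * (2 * Real.pi)) := by
    rw [mul_sub, hn]; ring
  have h3 : ((r : ℂ) - s) = (n : ℂ) * (2 * Real.pi) :=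
    mul_left_cancel₀ Complex.I_ne_zero h2
  have h4 : r - s = (n : ℝ) * (2 * Real.pi) := by exact_mod_cast h3
  have hn0 : n = 0 := by
    by_contra hn0
    have h5' : (1 : ℤ) ≤ |n| := Int.one_le_abs (by omega)
    have h5 : (1 : ℝ) ≤ |(n : ℝ)| := by rw [← Int.cast_abs]; exact_mod_cast h5'
    have hπ := Real.pi_pos
    have h6 : |r - s| = |(n:ℝ)| * (2 * Real.pi) := by
      rw [h4, abs_mul, abs_of_pos (show (0:ℝ) < 2 * Real.pi by linarith)]
    nlinarith
  rw [hn0] at h4; push_cast at h4; linarith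

private lemma friAux_moments_vanish (S : Finset ℂ) (h0 : (0:ℂ) ∉ S) (f : ℂ → ℂ)
    (hm : ∀ k : ℕ, 1 ≤ k → k ≤ S.card → ∑ z ∈ S, f z * z ^ k = 0) :
    ∀ z ∈ S, f z = 0 := by
  intro z0 hz0
  have hinj : Set.InjOn (id : ℂ → ℂ) S := Set.injOn_id _
  have hdeg : (Lagrange.basis S id z0).natDegree = S.card - 1 :=
    Lagrange.natDegree_basis hinj hz0
  have hcard : 1 ≤ S.card := Finset.card_pos.mpr ⟨z0, hz0⟩
  have hlt : (Lagrange.basis S id z0).natDegree < S.card := by omega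
  have key : ∑ z ∈ S, f z * z * (Lagrange.basis S id z0).eval z = 0 := by
    calc ∑ z ∈ S, f z * z * (Lagrange.basis S id z0).eval z
        = ∑ z ∈ S, ∑ i ∈ Finset.range S.card,
            (Lagrange.basis S id z0).coeff i * (f z * z ^ (i+1)) := by
          refine Finset.sum_congr rfl fun z _ => ?_
          rw [Polynomial.eval_eq_sum_range' hlt, Finset.mul_sum]
          refine Finset.sum_congr rfl fun i _ => ?_
          ring
      _ = ∑ i ∈ Finset.range S.card, ∑ z ∈ S,
            (Lagrange.basis S id z0).coeff i * (f z * z ^ (i+1)) := Finset.sum_comm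
      _ = 0 := Finset.sum_eq_zero fun i hi => by
          rw [← Finset.mul_sum, hm (i+1) (by omega)
            (by have := Finset.mem_range.mp hi; omega), mul_zero]
  have key2 : ∑ z ∈ S, f z * z * (Lagrange.basis S id z0).eval z = f z0 * z0 := by
    rw [Finset.sum_eq_single z0]
    · have h := Lagrange.eval_basis_self hinj hz0
      simp only [id] at h
      rw [h, mul_one]
    · intro z hz hne
      have h : (Lagrange.basis S id z0).eval (id z) = 0 :=
        Lagrange.eval_basis_of_ne (fun hc => hne hc.symm) hz
      simp only [id] at h
      rw [h, mul_zero]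
    · intro hcon; exact absurd hz0 hcon
  have hfz : f z0 * z0 = 0 := key2 ▸ key
  rcases mul_eq_zero.mp hfz with hc | hc
  · exact hc
  · exact absurd (hc ▸ hz0) h0

/-- **Theorem 4 (FRI-TEM).** Perfect recovery of the FRI parameters (off-grid delays)
from `N ≥ 2K + 2` IF-TEM measurements, with a sampling kernel passing the
Fourier-series coefficients indexed by `k ∈ {-K,…,-1,1,…,K}` and `K ≥ 2L`.
The column index `j : Fin (2K)` corresponds to `k = j - K` for `j < K` and
`k = j - K + 1` for `j ≥ K`. -/
theorem fri_tem_perfect_recovery_no_zero_freq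
    (T : ℝ) (hT : 0 < T) (L K : ℕ) (hL : 1 ≤ L) (hKL : 2 * L ≤ K)
    (h : ℝ → ℝ) (hh_int : Integrable h)
    (hhat : ℝ → ℂ)
    (hhat_def : ∀ ω : ℝ, hhat ω = ∫ s : ℝ, (h s : ℂ) * Complex.exp (-Complex.I * ω * s))
    (hhat_ne : ∀ k : ℤ, 1 ≤ |k| → |k| ≤ (K : ℤ) → hhat (k * (2 * Real.pi / T)) ≠ 0)
    (y : (Fin L → ℝ) → (Fin L → ℝ) → ℝ → ℂ)
    (hy_def : ∀ (α τ : Fin L → ℝ) (u : ℝ),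
      y α τ u = ∑ j : Fin (2 * K),
        (1 / (T : ℂ)) * hhat
            (((if (j : ℕ) < K then (j : ℤ) - (K : ℤ) else (j : ℤ) - (K : ℤ) + 1) : ℤ)
              * (2 * Real.pi / T))
          * (∑ ℓ : Fin L, (α ℓ : ℂ) *
              Complex.exp (-Complex.I
                * (((if (j : ℕ) < K then (j : ℤ) - (K : ℤ) else (j : ℤ) - (K : ℤ) + 1) : ℤ) : ℂ)
                * ((2 * Real.pi / T : ℝ) : ℂ) * (τ ℓ : ℂ)))
          * Complex.exp (Complex.I
              * (((if (j : ℕ) < K then (j : ℤ) - (K : ℤ) else (j : ℤ) - (K : ℤ) + 1) : ℤ) : ℂ)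
              * ((2 * Real.pi / T : ℝ) : ℂ) * (u : ℂ)))
    (a a' τ τ' : Fin L → ℝ)
    (ha_pos : ∀ ℓ, 0 < a ℓ) (ha'_pos : ∀ ℓ, 0 < a' ℓ)
    (hτ_mem : ∀ ℓ, τ ℓ ∈ Set.Ico 0 T) (hτ'_mem : ∀ ℓ, τ' ℓ ∈ Set.Ico 0 T)
    (hτ_inj : Function.Injective τ) (hτ'_inj : Function.Injective τ')
    (N : ℕ) (hN : 2 * K + 2 ≤ N)
    (t : Fin N → ℝ) (ht_mono : StrictMono t)
    (ht_nonneg : ∀ n, 0 ≤ t n) (ht_lt : ∀ n, t n < T)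
    (hmeas : ∀ n : Fin (N - 1),
      (∫ u in (t ⟨(n : ℕ), by have := n.isLt; omega⟩)..(t ⟨(n : ℕ) + 1, by have := n.isLt; omega⟩),
        y a τ u)
      = ∫ u in (t ⟨(n : ℕ), by have := n.isLt; omega⟩)..(t ⟨(n : ℕ) + 1, by have := n.isLt; omega⟩),
        y a' τ' u) :
    ∃ π : Equiv.Perm (Fin L), ∀ ℓ : Fin L, τ' ℓ = τ (π ℓ) ∧ a' ℓ = a (π ℓ) := by
  classical
  have hπ := Real.pi_pos
  have hω_pos : 0 < 2 * Real.pi / T := by positivity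
  have hK2 : 2 ≤ K := by omega
  -- index maps
  set kj : Fin (2*K) → ℤ :=
    fun j => if (j:ℕ) < K then (j:ℤ) - (K:ℤ) else (j:ℤ) - (K:ℤ) + 1 with hkj_def
  set ej : Fin (2*K) → ℕ := fun j => if (j:ℕ) < K then (j:ℕ) else (j:ℕ) + 1 with hej_def
  have hkj_ne : ∀ j, kj j ≠ 0 := by
    intro j; have := j.isLt
    simp only [hkj_def]; split_ifs with hj <;> omega
  have hkj_abs : ∀ j, 1 ≤ |kj j| ∧ |kj j| ≤ (K:ℤ) := by
    intro j; have := j.isLt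
    refine ⟨Int.one_le_abs (hkj_ne j), abs_le.mpr ?_⟩
    simp only [hkj_def]; split_ifs with hj <;> omega
  have hkj_add : ∀ j, kj j + (K:ℤ) = (ej j : ℤ) := by
    intro j; have := j.isLt
    simp only [hkj_def, hej_def]; split_ifs with hj <;> omega
  have hej_ne : ∀ j, ej j ≠ K := by
    intro j; have := j.isLt
    simp only [hej_def]; split_ifs with hj <;> omega
  have hej_le : ∀ j, ej j ≤ 2*K := by
    intro j; have := j.isLt
    simp only [hej_def]; split_ifs with hj <;> omega
  have hej_inj : Function.Injective ej := by
    intro i j hij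
    have hi := i.isLt; have hj := j.isLt
    simp only [hej_def] at hij
    apply Fin.ext
    split_ifs at hij <;> omega
  have hkj_surj : ∀ k : ℤ, 1 ≤ |k| → |k| ≤ (K:ℤ) → ∃ j, kj j = k := by
    intro k h1 h2
    rw [le_abs] at h1
    rw [abs_le] at h2
    rcases le_or_gt k 0 with hk | hk
    · refine ⟨⟨(k + K).toNat, by omega⟩, ?_⟩
      simp only [hkj_def]
      rw [if_pos (by omega)]
      omega
    · refine ⟨⟨(k + K - 1).toNat, by omega⟩, ?_⟩
      simp only [hkj_def]
      rw [if_neg (by omega)]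
      omega
  -- moment sums and Fourier coefficients
  set Ms : (Fin L → ℝ) → (Fin L → ℝ) → ℤ → ℂ := fun α τα k =>
    ∑ ℓ, (α ℓ : ℂ) * Complex.exp (-Complex.I * (k:ℂ)
      * ((2 * Real.pi / T : ℝ) : ℂ) * (τα ℓ : ℂ)) with hMs_def
  set cc : Fin (2*K) → ℂ := fun j =>
    Complex.I * ((kj j : ℤ) : ℂ) * ((2 * Real.pi / T : ℝ) : ℂ) with hcc_def
  have hcc_ne : ∀ j, cc j ≠ 0 := by
    intro j
    simp only [hcc_def]
    exact mul_ne_zero (mul_ne_zero Complex.I_ne_zero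
      (Int.cast_ne_zero.mpr (hkj_ne j)))
      (Complex.ofReal_ne_zero.mpr (ne_of_gt hω_pos))
  set A : (Fin L → ℝ) → (Fin L → ℝ) → Fin (2*K) → ℂ := fun α τα j =>
    1 / (T : ℂ) * hhat ((kj j : ℤ) * (2 * Real.pi / T)) * Ms α τα (kj j) with hA_def
  have hint : ∀ (α τα : Fin L → ℝ) (s r : ℝ),
      (∫ u in s..r, y α τα u)
        = ∑ j, A α τα j * ((Complex.exp (cc j * r) - Complex.exp (cc j * s)) / cc j) := by
    intro α τα s r
    have hrw : ∀ u : ℝ, y α τα u = ∑ j, A α τα j * Complex.exp (cc j * u) := by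
      intro u
      rw [hy_def]
    calc (∫ u in s..r, y α τα u)
        = ∫ u in s..r, ∑ j, A α τα j * Complex.exp (cc j * u) := by
          simp_rw [hrw]
      _ = ∑ j, ∫ u in s..r, A α τα j * Complex.exp (cc j * u) := by
          apply intervalIntegral.integral_finset_sum
          intro j _
          apply Continuous.intervalIntegrable
          exact continuous_const.mul (Complex.continuous_exp.comp
            (continuous_const.mul Complex.continuous_ofReal))
      _ = ∑ j, A α τα j * ((Complex.exp (cc j * r) - Complex.exp (cc j * s)) / cc j) := by
          refine Finset.sum_congr rfl fun j _ => ?_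
          rw [intervalIntegral.integral_const_mul, integral_exp_mul_complex (hcc_ne j)]
  -- the antiderivative of the difference signal
  set D : Fin (2*K) → ℂ := fun j => A a τ j - A a' τ' j with hD_def
  set G : ℝ → ℂ := fun u => ∑ j, (D j / cc j) * Complex.exp (cc j * u) with hG_def
  have hGdiff : ∀ s r : ℝ,
      (∫ u in s..r, y a τ u) - (∫ u in s..r, y a' τ' u) = G r - G s := by
    intro s r
    rw [hint a τ s r, hint a' τ' s r]
    simp only [hG_def, hD_def]
    rw [← Finset.sum_sub_distrib, ← Finset.sum_sub_distrib]
    refine Finset.sum_congr rfl fun j _ => ?_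
    field_simp
  have hN0 : 0 < N := by omega
  have hGstep : ∀ n : ℕ, (hn : n + 1 < N) →
      G (t ⟨n+1, hn⟩) = G (t ⟨n, by omega⟩) := by
    intro n hn
    have h1 : (∫ u in (t ⟨n, by omega⟩)..(t ⟨n+1, hn⟩), y a τ u)
        = ∫ u in (t ⟨n, by omega⟩)..(t ⟨n+1, hn⟩), y a' τ' u := hmeas ⟨n, by omega⟩
    have h2 := hGdiff (t ⟨n, by omega⟩) (t ⟨n+1, hn⟩)
    rw [h1, sub_self] at h2
    exact sub_eq_zero.mp h2.symm
  have hGconst : ∀ m : ℕ, (hm : m < N) → G (t ⟨m, hm⟩) = G (t ⟨0, hN0⟩) := by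
    intro m
    induction m with
    | zero => intro hm; rfl
    | succ k ih => intro hm; rw [hGstep k hm]; exact ih (by omega)
  -- the nodes on the unit circle
  set z : Fin N → ℂ := fun n =>
    Complex.exp (Complex.I * ((2 * Real.pi / T : ℝ) : ℂ) * (t n : ℂ)) with hz_def
  have habs : ∀ s1 s2 : ℝ, s1 ∈ Set.Ico (0:ℝ) T → s2 ∈ Set.Ico (0:ℝ) T →
      |2 * Real.pi / T * s1 - 2 * Real.pi / T * s2| < 2 * Real.pi := by
    intro s1 s2 hs1 hs2
    obtain ⟨h10, h1T⟩ := hs1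
    obtain ⟨h20, h2T⟩ := hs2
    rw [← mul_sub, abs_mul, abs_of_pos hω_pos]
    have hd : |s1 - s2| < T := abs_sub_lt_iff.mpr ⟨by linarith, by linarith⟩
    calc 2 * Real.pi / T * |s1 - s2| < 2 * Real.pi / T * T :=
          (mul_lt_mul_iff_right₀ hω_pos).mpr hd
      _ = 2 * Real.pi := by field_simp
  have hz_inj : Function.Injective z := by
    intro n m hnm
    simp only [hz_def] at hnm
    have h1 : Complex.exp (Complex.I * ((2 * Real.pi / T * t n : ℝ) : ℂ))
        = Complex.exp (Complex.I * ((2 * Real.pi / T * t m : ℝ) : ℂ)) := by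
      rw [show ((2 * Real.pi / T * t n : ℝ) : ℂ)
          = ((2 * Real.pi / T : ℝ) : ℂ) * (t n : ℂ) by push_cast; ring,
        show ((2 * Real.pi / T * t m : ℝ) : ℂ)
          = ((2 * Real.pi / T : ℝ) : ℂ) * (t m : ℂ) by push_cast; ring,
        ← mul_assoc, ← mul_assoc]
      exact hnm
    have h2 := friAux_exp_I_inj (habs _ _ ⟨ht_nonneg n, ht_lt n⟩ ⟨ht_nonneg m, ht_lt m⟩) h1
    exact ht_mono.injective (mul_left_cancel₀ (ne_of_gt hω_pos) h2)
  -- the polynomial vanishing at all nodes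
  set p : Polynomial ℂ :=
    (∑ j, Polynomial.C (D j / cc j) * Polynomial.X ^ (ej j))
      - Polynomial.C (G (t ⟨0, hN0⟩)) * Polynomial.X ^ K with hp_def
  have hzpow : ∀ (n : Fin N) (m : ℕ), z n ^ m
      = Complex.exp ((m:ℂ) * (Complex.I * ((2 * Real.pi / T : ℝ) : ℂ) * (t n : ℂ))) := by
    intro n m
    rw [Complex.exp_nat_mul, hz_def]
  have hkey : ∀ (j : Fin (2*K)) (n : Fin N),
      (z n) ^ (ej j) = Complex.exp (cc j * (t n : ℂ)) * (z n) ^ K := by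
    intro j n
    rw [hzpow, hzpow, ← Complex.exp_add]
    congr 1
    have hcast : ((ej j : ℕ) : ℂ) = ((kj j : ℤ) : ℂ) + (K : ℂ) := by
      have h1 : ((ej j : ℕ) : ℤ) = kj j + K := (hkj_add j).symm
      calc ((ej j : ℕ) : ℂ) = (((ej j : ℕ) : ℤ) : ℂ) := by push_cast; ring
        _ = ((kj j + (K:ℤ) : ℤ) : ℂ) := by rw [h1]
        _ = ((kj j : ℤ) : ℂ) + (K : ℂ) := by push_cast; ring
    rw [hcast, hcc_def]
    ring
  have hp_eval : ∀ n : Fin N, p.eval (z n) = 0 := by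
    intro n
    have hGn : G (t n) = G (t ⟨0, hN0⟩) := hGconst n.1 n.2
    rw [hp_def]
    simp only [Polynomial.eval_sub, Polynomial.eval_finset_sum, Polynomial.eval_mul,
      Polynomial.eval_C, Polynomial.eval_pow, Polynomial.eval_X]
    have hsum : ∑ j, (D j / cc j) * (z n) ^ (ej j) = G (t n) * (z n) ^ K := by
      rw [hG_def, Finset.sum_mul]
      refine Finset.sum_congr rfl fun j _ => ?_
      rw [hkey j n]
      ring
    rw [hsum, hGn, sub_self]
  have hp_deg : p.natDegree ≤ 2*K := by
    rw [hp_def]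
    apply le_trans (Polynomial.natDegree_sub_le _ _)
    apply max_le
    · exact Polynomial.natDegree_sum_le_of_forall_le _ _ fun j _ =>
        le_trans (Polynomial.natDegree_C_mul_X_pow_le _ _) (hej_le j)
    · exact le_trans (Polynomial.natDegree_C_mul_X_pow_le _ _) (by omega)
  have hp0 : p = 0 :=
    Polynomial.eq_zero_of_natDegree_lt_card_of_eval_eq_zero p hz_inj hp_eval
      (by rw [Fintype.card_fin]; omega)
  have hD0 : ∀ j, D j = 0 := by
    intro j0
    have h1 : p.coeff (ej j0) = D j0 / cc j0 := by
      rw [hp_def, Polynomial.coeff_sub, Polynomial.finset_sum_coeff]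
      simp only [Polynomial.coeff_C_mul, Polynomial.coeff_X_pow]
      rw [Finset.sum_eq_single j0]
      · rw [if_pos rfl, mul_one, if_neg (hej_ne j0), mul_zero, sub_zero]
      · intro b _ hb
        rw [if_neg (fun hc => hb (hej_inj hc.symm)), mul_zero]
      · intro hcon; exact absurd (Finset.mem_univ j0) hcon
    have h2 : p.coeff (ej j0) = 0 := by rw [hp0, Polynomial.coeff_zero]
    have h3 : D j0 / cc j0 = 0 := by rw [← h1, h2]
    rcases div_eq_zero_iff.mp h3 with hc | hc
    · exact hc
    · exact absurd hc (hcc_ne j0)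
  -- equality of moments
  have hMeq : ∀ k : ℤ, 1 ≤ |k| → |k| ≤ (K:ℤ) → Ms a τ k = Ms a' τ' k := by
    intro k h1 h2
    obtain ⟨j, hj⟩ := hkj_surj k h1 h2
    have hD := hD0 j
    simp only [hD_def, hA_def] at hD
    have hAA : 1 / (T : ℂ) * hhat ((kj j : ℤ) * (2 * Real.pi / T)) * Ms a τ (kj j)
        = 1 / (T : ℂ) * hhat ((kj j : ℤ) * (2 * Real.pi / T)) * Ms a' τ' (kj j) :=
      sub_eq_zero.mp hD
    have hT0 : 1 / (T : ℂ) ≠ 0 := one_div_ne_zero (Complex.ofReal_ne_zero.mpr hT.ne')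
    have hh0 : hhat ((kj j : ℤ) * (2 * Real.pi / T)) ≠ 0 :=
      hhat_ne (kj j) (hkj_abs j).1 (hkj_abs j).2
    have := mul_left_cancel₀ (mul_ne_zero hT0 hh0) hAA
    rw [← hj]
    exact this
  -- step 2: matching the atoms
  set w : Fin L → ℂ := fun ℓ =>
    Complex.exp (-Complex.I * ((2 * Real.pi / T : ℝ) : ℂ) * (τ ℓ : ℂ)) with hw_def
  set w' : Fin L → ℂ := fun ℓ =>
    Complex.exp (-Complex.I * ((2 * Real.pi / T : ℝ) : ℂ) * (τ' ℓ : ℂ)) with hw'_def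
  have hexp_inj : ∀ {s1 s2 : ℝ}, s1 ∈ Set.Ico (0:ℝ) T → s2 ∈ Set.Ico (0:ℝ) T →
      Complex.exp (-Complex.I * ((2 * Real.pi / T : ℝ) : ℂ) * (s1 : ℂ))
        = Complex.exp (-Complex.I * ((2 * Real.pi / T : ℝ) : ℂ) * (s2 : ℂ)) →
      s1 = s2 := by
    intro s1 s2 hs1 hs2 he
    have h1 : Complex.exp (Complex.I * ((-(2 * Real.pi / T * s1) : ℝ) : ℂ))
        = Complex.exp (Complex.I * ((-(2 * Real.pi / T * s2) : ℝ) : ℂ)) := by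
      rw [show Complex.I * ((-(2 * Real.pi / T * s1) : ℝ) : ℂ)
          = -Complex.I * ((2 * Real.pi / T : ℝ) : ℂ) * (s1 : ℂ) by push_cast; ring,
        show Complex.I * ((-(2 * Real.pi / T * s2) : ℝ) : ℂ)
          = -Complex.I * ((2 * Real.pi / T : ℝ) : ℂ) * (s2 : ℂ) by push_cast; ring]
      exact he
    have habs' : |(-(2 * Real.pi / T * s1)) - (-(2 * Real.pi / T * s2))| < 2 * Real.pi := by
      rw [show (-(2 * Real.pi / T * s1)) - (-(2 * Real.pi / T * s2))
          = -(2 * Real.pi / T * s1 - 2 * Real.pi / T * s2) by ring, abs_neg]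
      exact habs s1 s2 hs1 hs2
    have h2 := friAux_exp_I_inj habs' h1
    have h3 : 2 * Real.pi / T * s1 = 2 * Real.pi / T * s2 := by linarith
    exact mul_left_cancel₀ (ne_of_gt hω_pos) h3
  have hw_inj : Function.Injective w := by
    intro ℓ1 ℓ2 he
    exact hτ_inj (hexp_inj (hτ_mem ℓ1) (hτ_mem ℓ2) he)
  have hw'_inj : Function.Injective w' := by
    intro ℓ1 ℓ2 he
    exact hτ'_inj (hexp_inj (hτ'_mem ℓ1) (hτ'_mem ℓ2) he)
  -- moments in power form
  have hpow : ∀ k : ℕ, 1 ≤ k → k ≤ 2*L →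
      (∑ ℓ, (a ℓ : ℂ) * w ℓ ^ k) = ∑ ℓ, (a' ℓ : ℂ) * w' ℓ ^ k := by
    intro k hk1 hk2
    have habs1 : (1:ℤ) ≤ |(k:ℤ)| := by rw [abs_of_nonneg (by positivity)]; exact_mod_cast hk1
    have habs2 : |(k:ℤ)| ≤ (K:ℤ) := by
      rw [abs_of_nonneg (by positivity)]; exact_mod_cast le_trans hk2 hKL
    have hM := hMeq (k:ℤ) habs1 habs2
    have hrw : ∀ (α τα : Fin L → ℝ), Ms α τα (k:ℤ)
        = ∑ ℓ, (α ℓ : ℂ) *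
            (Complex.exp (-Complex.I * ((2 * Real.pi / T : ℝ) : ℂ) * (τα ℓ : ℂ))) ^ k := by
      intro α τα
      simp only [hMs_def]
      refine Finset.sum_congr rfl fun ℓ _ => ?_
      rw [← Complex.exp_nat_mul]
      congr 1
      push_cast
      ring
    rw [hrw, hrw] at hM
    simp only [hw_def, hw'_def]
    exact hM
  -- the Prony argument
  set S : Finset ℂ := Finset.image w Finset.univ ∪ Finset.image w' Finset.univ with hS_def
  have hwS : ∀ ℓ, w ℓ ∈ S := fun ℓ =>
    Finset.mem_union_left _ (Finset.mem_image_of_mem w (Finset.mem_univ ℓ))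
  have hw'S : ∀ ℓ, w' ℓ ∈ S := fun ℓ =>
    Finset.mem_union_right _ (Finset.mem_image_of_mem w' (Finset.mem_univ ℓ))
  have hScard : S.card ≤ 2*L := by
    refine le_trans (Finset.card_union_le _ _) ?_
    have h1 := Finset.card_image_le (s := (Finset.univ : Finset (Fin L))) (f := w)
    have h2 := Finset.card_image_le (s := (Finset.univ : Finset (Fin L))) (f := w')
    simp only [Finset.card_univ, Fintype.card_fin] at h1 h2
    omega
  have h0S : (0:ℂ) ∉ S := by
    simp only [hS_def, Finset.mem_union, Finset.mem_image]
    rintro (⟨ℓ, _, hℓ⟩ | ⟨ℓ, _, hℓ⟩) <;> exact Complex.exp_ne_zero _ hℓ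
  set f : ℂ → ℂ := fun ζ =>
    (∑ ℓ, if w ℓ = ζ then (a ℓ : ℂ) else 0)
      - ∑ ℓ, if w' ℓ = ζ then (a' ℓ : ℂ) else 0 with hf_def
  have hmomf : ∀ k : ℕ, 1 ≤ k → k ≤ S.card → ∑ ζ ∈ S, f ζ * ζ ^ k = 0 := by
    intro k hk1 hk2
    have key : ∀ (v : Fin L → ℂ) (c : Fin L → ℝ), (∀ ℓ, v ℓ ∈ S) →
        (∑ ζ ∈ S, (∑ ℓ, if v ℓ = ζ then (c ℓ : ℂ) else 0) * ζ ^ k)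
          = ∑ ℓ, (c ℓ : ℂ) * v ℓ ^ k := by
      intro v c hv
      simp_rw [Finset.sum_mul]
      rw [Finset.sum_comm]
      refine Finset.sum_congr rfl fun ℓ _ => ?_
      simp_rw [ite_mul, zero_mul]
      rw [Finset.sum_ite_eq S (v ℓ) (fun ζ => (c ℓ : ℂ) * ζ ^ k), if_pos (hv ℓ)]
    simp only [hf_def]
    simp_rw [sub_mul]
    rw [Finset.sum_sub_distrib, key w a hwS, key w' a' hw'S,
      hpow k hk1 (le_trans hk2 hScard), sub_self]
  have hf0 := friAux_moments_vanish S h0S f hmomf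
  -- extract the matching
  have hmatch : ∀ ℓ, ∃ m, w m = w' ℓ ∧ a m = a' ℓ := by
    intro ℓ
    have h1 : f (w' ℓ) = 0 := hf0 _ (hw'S ℓ)
    have h2 : (∑ m, if w' m = w' ℓ then (a' m : ℂ) else 0) = (a' ℓ : ℂ) := by
      rw [Finset.sum_eq_single ℓ]
      · rw [if_pos rfl]
      · intro b _ hb
        rw [if_neg (fun hc => hb (hw'_inj hc))]
      · intro hcon; exact absurd (Finset.mem_univ ℓ) hcon
    simp only [hf_def] at h1
    rw [h2] at h1
    have h3 : (∑ m, if w m = w' ℓ then (a m : ℂ) else 0) = (a' ℓ : ℂ) :=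
      sub_eq_zero.mp h1
    by_cases hex : ∃ m, w m = w' ℓ
    · obtain ⟨m, hm⟩ := hex
      refine ⟨m, hm, ?_⟩
      have h4 : (∑ m', if w m' = w' ℓ then (a m' : ℂ) else 0) = (a m : ℂ) := by
        rw [Finset.sum_eq_single m]
        · rw [if_pos hm]
        · intro b _ hb
          rw [if_neg (fun hc => hb (hw_inj (hc.trans hm.symm)))]
        · intro hcon; exact absurd (Finset.mem_univ m) hcon
      have h5 : (a m : ℂ) = (a' ℓ : ℂ) := by rw [← h4, h3]
      exact_mod_cast h5
    · exfalso
      have h6 : (∑ m, if w m = w' ℓ then (a m : ℂ) else 0) = 0 :=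
        Finset.sum_eq_zero fun m _ => if_neg (fun hc => hex ⟨m, hc⟩)
      rw [h6] at h3
      have : a' ℓ = 0 := by exact_mod_cast h3.symm
      exact (ne_of_gt (ha'_pos ℓ)) this
  choose σ hσ1 hσ2 using hmatch
  have hσ_inj : Function.Injective σ := by
    intro ℓ1 ℓ2 hs
    apply hw'_inj
    rw [← hσ1 ℓ1, ← hσ1 ℓ2, hs]
  refine ⟨Equiv.ofBijective σ (Finite.injective_iff_bijective.mp hσ_inj), fun ℓ => ⟨?_, ?_⟩⟩
  · exact (hexp_inj (hτ_mem (σ ℓ)) (hτ'_mem ℓ) (hσ1 ℓ)).symm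
  · exact (hσ2 ℓ).symm
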